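/- Let G be the simple graph with vertex set {p, u, v, q} ∪ {w_n : n ∈ ℕ} whose edges are pu, vq, and uw_n and w_nv for every n ∈ ℕ, and let every edge have resistance 1. Then no flow of intensity 1 from p to q exists in this network that satisfies Kirchhoff's cycle law. (Hence non-locally-finite networks need not admit any flow satisfying Kirchhoff's cycle law.) -/

import Mathlib

open scoped ENNReal Classical

/-- `f` is a flow of intensity `I` from `p` to `q` in the graph `G`:
it is antisymmetric, vanishes on non-adjacent pairs, and satisfies
Kirchhoff's node law at every vertex (the family of values on edges leaving a
vertex is summable, with sum `I` at `p`, `-I` at `q` and `0` elsewhere). -/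
def IsFlow {V : Type} (G : SimpleGraph V) (p q : V) (I : ℝ) (f : V → V → ℝ) : Prop :=
  (∀ x y, f x y = - f y x) ∧
  (∀ x y, ¬ G.Adj x y → f x y = 0) ∧
  ∀ x : V, HasSum (fun y : G.neighborSet x => f x y)
    (if x = p then I else if x = q then -I else 0)

/-- The energy `W(f) = ∑_{xy ∈ E} f(x,y)² r(xy)`; each edge of `G` corresponds to
exactly two ordered adjacent pairs contributing the same amount, whence the
division by 2. Valued in `ℝ≥0∞`. -/
noncomputable def energy {V : Type} (G : SimpleGraph V) (r : Sym2 V → ℝ)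
    (f : V → V → ℝ) : ℝ≥0∞ :=
  (∑' e : {e : V × V // G.Adj e.1 e.2},
      ENNReal.ofReal (f e.1.1 e.1.2 ^ 2 * r s(e.1.1, e.1.2))) / 2

/-- Kirchhoff's cycle law: around every (finite) cycle the potential
differences `f(x,y) · r(xy)` sum to zero. -/
def CycleLaw {V : Type} (G : SimpleGraph V) (r : Sym2 V → ℝ) (f : V → V → ℝ) : Prop :=
  ∀ (v : V) (c : G.Walk v v), c.IsCycle →
    (c.darts.map (fun d => f d.toProd.1 d.toProd.2 * r d.edge)).sum = 0

/-- `f` is cut-respecting: for every set `X` of vertices containing both `p` and `q`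
such that only finitely many edges join `X` to its complement, the net flow
across the cut is zero. -/
def CutRespecting {V : Type} (G : SimpleGraph V) (p q : V) (f : V → V → ℝ) : Prop :=
  ∀ X : Set V, p ∈ X → q ∈ X →
    ∀ hX : {e : V × V | e.1 ∈ X ∧ e.2 ∉ X ∧ G.Adj e.1 e.2}.Finite,
      ∑ e ∈ hX.toFinset, f e.1 e.2 = 0

/-- The vertices of the fan graph: `p`, `u`, `v`, `q` and infinitely many
middle vertices `w n`. -/
inductive FanV : Type
  | p | u | v | q
  | w (n : ℕ)

/-- The generating relation of the fan graph: edges `pu`, `vq`, `u wₙ`, `wₙ v`. -/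
def fanRel : FanV → FanV → Prop
  | .p, .u => True
  | .v, .q => True
  | .u, .w _ => True
  | .w _, .v => True
  | _, _ => False

/-- The fan graph: two edges `pu`, `vq` and infinitely many disjoint
`u`–`v` paths of length two. -/
def fanGraph : SimpleGraph FanV := SimpleGraph.fromRel fanRel

deriving instance DecidableEq for FanV

lemma adj_pu : fanGraph.Adj .p .u := by
  simp [fanGraph, SimpleGraph.fromRel_adj, fanRel]

lemma adj_uw (n : ℕ) : fanGraph.Adj .u (.w n) := by
  simp [fanGraph, SimpleGraph.fromRel_adj, fanRel]

lemma adj_wv (n : ℕ) : fanGraph.Adj (.w n) .v := by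
  simp [fanGraph, SimpleGraph.fromRel_adj, fanRel]

lemma nbr_p (y : FanV) (hy : fanGraph.Adj .p y) : y = .u := by
  cases y <;> simp [fanGraph, SimpleGraph.fromRel_adj, fanRel] at hy ⊢

lemma nbr_w (n : ℕ) (y : FanV) (hy : fanGraph.Adj (.w n) y) : y = .u ∨ y = .v := by
  cases y <;> simp [fanGraph, SimpleGraph.fromRel_adj, fanRel] at hy ⊢

lemma nbr_u (y : FanV) (hy : fanGraph.Adj .u y) : y = .p ∨ ∃ n, y = .w n := by
  cases y <;> simp [fanGraph, SimpleGraph.fromRel_adj, fanRel] at hy ⊢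

/-- The 4-cycle `u, w 0, v, w n, u`. -/
def cyc (n : ℕ) : fanGraph.Walk .u .u :=
  .cons (adj_uw 0) (.cons (adj_wv 0) (.cons (adj_wv n).symm (.cons (adj_uw n).symm .nil)))

lemma cyc_isCycle (n : ℕ) (hn : n ≠ 0) : (cyc n).IsCycle := by
  rw [SimpleGraph.Walk.isCycle_def, SimpleGraph.Walk.isTrail_def]
  refine ⟨?_, by simp [cyc], ?_⟩ <;>
    simp [cyc, Sym2.eq, Sym2.rel_iff', Ne.symm hn, hn]

/-- In the fan network with unit resistances there is no flow of intensity `1`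
from `p` to `q` satisfying Kirchhoff's cycle law. -/
theorem fan_no_flow_with_cycleLaw :
    ¬ ∃ f : FanV → FanV → ℝ,
        IsFlow fanGraph FanV.p FanV.q 1 f ∧
        CycleLaw fanGraph (fun _ => (1 : ℝ)) f := by
  rintro ⟨f, ⟨hanti, hzero, hnode⟩, hcl⟩
  -- flow value on pu is 1
  have hpu : f .p .u = 1 := by
    have h := hnode .p
    simp only [if_pos rfl] at h
    rw [show (fun y : fanGraph.neighborSet .p => f .p y) = (f .p ∘ Subtype.val) from rfl,
      hasSum_subtype_iff_indicator] at h
    have h2 : (fanGraph.neighborSet FanV.p).indicator (f .p)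
        = fun y => if y = .u then f .p .u else 0 := by
      funext y
      by_cases hy : y ∈ fanGraph.neighborSet FanV.p
      · have := nbr_p y hy; subst this; simp [Set.indicator_of_mem hy]
      · rw [Set.indicator_of_notMem hy]
        have : y ≠ FanV.u := fun h' => hy (h' ▸ adj_pu)
        simp [this]
    rw [h2] at h
    exact (h.unique (hasSum_ite_eq _ _)).symm
  -- node law at `w n` : f (w n) v = f u (w n)
  have hw : ∀ n : ℕ, f (.w n) .v = f .u (.w n) := by
    intro n
    have h := hnode (.w n)
    simp only [show (FanV.w n = FanV.p) = False by simp, show (FanV.w n = FanV.q) = False by simp,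
      if_false] at h
    rw [show (fun y : fanGraph.neighborSet (.w n) => f (.w n) y) = (f (.w n) ∘ Subtype.val)
        from rfl, hasSum_subtype_iff_indicator] at h
    have h2 : (fanGraph.neighborSet (FanV.w n)).indicator (f (.w n))
        = fun y => (if y = .u then f (.w n) .u else 0) + (if y = .v then f (.w n) .v else 0) := by
      funext y
      by_cases hy : y ∈ fanGraph.neighborSet (FanV.w n)
      · rcases nbr_w n y hy with rfl | rfl <;> simp [Set.indicator_of_mem hy]
      · rw [Set.indicator_of_notMem hy]
        have h1 : y ≠ FanV.u := fun h' => hy (h' ▸ (adj_uw n).symm)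
        have h2 : y ≠ FanV.v := fun h' => hy (h' ▸ adj_wv n)
        simp [h1, h2]
    rw [h2] at h
    have := h.unique ((hasSum_ite_eq FanV.u (f (.w n) .u)).add
      (hasSum_ite_eq FanV.v (f (.w n) .v)))
    have ha := hanti (.w n) .u
    linarith
  -- cycle law : all f u (w n) are equal
  have hconst : ∀ n : ℕ, f .u (.w n) = f .u (.w 0) := by
    intro n
    rcases eq_or_ne n 0 with rfl | hn
    · rfl
    · have h := hcl .u (cyc n) (cyc_isCycle n hn)
      simp only [cyc, SimpleGraph.Walk.darts_cons, SimpleGraph.Walk.darts_nil, List.map_cons,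
        List.map_nil, List.sum_cons, List.sum_nil, mul_one, add_zero] at h
      have h1 := hw 0
      have h2 := hw n
      have h3 := hanti .v (.w n)
      have h4 := hanti (.w n) .u
      linarith
  -- summability at u forces f u (w 0) = 0
  have hzero0 : f .u (.w 0) = 0 := by
    have hs : Summable (fun y : fanGraph.neighborSet .u => f .u y) := (hnode .u).summable
    have hinj : Function.Injective (fun n : ℕ => (⟨.w n, adj_uw n⟩ : fanGraph.neighborSet .u)) :=
      fun a b hab => by simpa using congrArg Subtype.val hab
    have hs2 : Summable (fun n : ℕ => f .u (.w n)) := hs.comp_injective hinj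
    have hten := hs2.tendsto_atTop_zero
    have : (fun n : ℕ => f .u (.w n)) = fun _ => f .u (.w 0) := funext hconst
    rw [this] at hten
    exact (tendsto_nhds_unique tendsto_const_nhds hten)
  -- the node law at u now gives 0 = f u p = -1
  have h := hnode .u
  simp only [show (FanV.u = FanV.p) = False by simp, show (FanV.u = FanV.q) = False by simp,
    if_false] at h
  rw [show (fun y : fanGraph.neighborSet .u => f .u y) = (f .u ∘ Subtype.val) from rfl,
    hasSum_subtype_iff_indicator] at h
  have h2 : (fanGraph.neighborSet FanV.u).indicator (f .u)
      = fun y => if y = .p then f .u .p else 0 := by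
    funext y
    by_cases hy : y ∈ fanGraph.neighborSet FanV.u
    · rcases nbr_u y hy with rfl | ⟨n, rfl⟩
      · simp [Set.indicator_of_mem hy]
      · have : f .u (.w n) = 0 := by rw [hconst n, hzero0]
        simp [Set.indicator_of_mem hy, this]
    · rw [Set.indicator_of_notMem hy]
      have : y ≠ FanV.p := fun h' => hy (h' ▸ adj_pu.symm)
      simp [this]
  rw [h2] at h
  have := h.unique (hasSum_ite_eq _ _)
  have ha := hanti .u .p
  linarith
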